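/- In the determinization construction for VPAs: for a well-nested word w, states p, q of the original VPA A, and a subset state S of the determinized automaton containing the pair (p, q), if there is a run of A starting from configuration (q, ε) over w ending in state q', then the unique run of the determinized automaton starting from (S, ε) over w ends in a state S' containing (p, q'). -/
import Mathlib


/-- Kinds of symbols in a structured alphabet: open, close, neutral. -/
inductive SymKind | op | cl | ne
deriving DecidableEq

/-- Well-nested words over a structured alphabet, given by a kind function. -/
inductive WellNested {α : Type*} (k : α → SymKind) : List α → Prop
  | nil : WellNested k []
  | neutral {a : α} : k a = SymKind.ne → WellNested k [a]
  | concat {w₁ w₂ : List α} : w₁ ≠ [] → w₂ ≠ [] →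
      WellNested k w₁ → WellNested k w₂ → WellNested k (w₁ ++ w₂)
  | nest {a b : α} {w : List α} : k a = SymKind.op → k b = SymKind.cl →
      WellNested k w → WellNested k (a :: w ++ [b])


/-- The number of symbols of a given kind occurring in a word. -/
def countKind {α : Type*} (k : α → SymKind) (t : SymKind) (w : List α) : ℕ :=
  w.countP (fun s => decide (k s = t))

/-- A visibly pushdown automaton over a structured alphabet (given by `kind`). -/
structure VPA (α Q Γ : Type*) where
  kind : α → SymKind
  /-- push transitions: on an open symbol, move state and push a stack symbol -/
  Δop : Q → α → Q → Γ → Prop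
  /-- pop transitions: on a close symbol, pop the matching top stack symbol -/
  Δcl : Q → α → Γ → Q → Prop
  /-- neutral transitions -/
  Δne : Q → α → Q → Prop
  init : Set Q
  final : Set Q

/-- `A.Steps c w c'`: there is a run of the VPA `A` over the word `w` from
configuration `c` to configuration `c'` (stacks are lists with the top in front). -/
inductive VPA.Steps {α Q Γ : Type*} (A : VPA α Q Γ) :
    Q × List Γ → List α → Q × List Γ → Prop
  | nil (c : Q × List Γ) : VPA.Steps A c [] c
  | op {q q' : Q} {σ : List Γ} {x : Γ} {a : α} {w : List α} {c : Q × List Γ} :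
      A.kind a = SymKind.op → A.Δop q a q' x →
      VPA.Steps A (q', x :: σ) w c → VPA.Steps A (q, σ) (a :: w) c
  | cl {q q' : Q} {σ : List Γ} {x : Γ} {a : α} {w : List α} {c : Q × List Γ} :
      A.kind a = SymKind.cl → A.Δcl q a x q' →
      VPA.Steps A (q', σ) w c → VPA.Steps A (q, x :: σ) (a :: w) c
  | ne {q q' : Q} {σ : List Γ} {a : α} {w : List α} {c : Q × List Γ} :
      A.kind a = SymKind.ne → A.Δne q a q' →
      VPA.Steps A (q', σ) w c → VPA.Steps A (q, σ) (a :: w) c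

/-- A VPA accepts a word if some run from an initial state with empty stack
ends in a final state (with empty stack). -/
def VPA.Accepts {α Q Γ : Type*} (A : VPA α Q Γ) (w : List α) : Prop :=
  ∃ q ∈ A.init, ∃ q' ∈ A.final, A.Steps (q, []) w (q', [])

/-- The determinization construction for VPAs: states are sets of pairs of states,
stack symbols are sets of (state, stack symbol, state) triples. -/
def VPA.det {α Q Γ : Type*} (A : VPA α Q Γ) : VPA α (Set (Q × Q)) (Set (Q × Γ × Q)) where
  kind := A.kind
  Δop := fun S a S' T =>
    S' = {r : Q × Q | r.1 = r.2 ∧ ∃ p p' x, (p, p') ∈ S ∧ A.Δop p' a r.1 x} ∧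
    T = {t : Q × Γ × Q | ∃ p', (t.1, p') ∈ S ∧ A.Δop p' a t.2.2 t.2.1}
  Δcl := fun S a T S' =>
    S' = {r : Q × Q | ∃ p' q' x, (p', q') ∈ S ∧ (r.1, x, p') ∈ T ∧ A.Δcl q' a x r.2}
  Δne := fun S a S' =>
    S' = {r : Q × Q | ∃ q', (r.1, q') ∈ S ∧ A.Δne q' a r.2}
  init := {S | S = {r : Q × Q | r.1 = r.2 ∧ r.1 ∈ A.init}}
  final := {S | ∃ p q, (p, q) ∈ S ∧ p ∈ A.init ∧ q ∈ A.final}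

section Aux

variable {α Q Γ : Type*} {A : VPA α Q Γ}

theorem VPA.Steps.append_run {c c' c'' : Q × List Γ} {w₁ w₂ : List α}
    (h₁ : A.Steps c w₁ c') (h₂ : A.Steps c' w₂ c'') : A.Steps c (w₁ ++ w₂) c'' := by
  induction h₁ with
  | nil => exact h₂
  | op hk ht _ ih => exact .op hk ht (ih h₂)
  | cl hk ht _ ih => exact .cl hk ht (ih h₂)
  | ne hk ht _ ih => exact .ne hk ht (ih h₂)

theorem VPA.steps_split {c c'' : Q × List Γ} {w₁ w₂ : List α}
    (h : A.Steps c (w₁ ++ w₂) c'') : ∃ c', A.Steps c w₁ c' ∧ A.Steps c' w₂ c'' := by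
  induction w₁ generalizing c with
  | nil => exact ⟨c, .nil c, h⟩
  | cons a w ih =>
    cases h with
    | op hk ht hs => obtain ⟨c', h1, h2⟩ := ih hs; exact ⟨c', .op hk ht h1, h2⟩
    | cl hk ht hs => obtain ⟨c', h1, h2⟩ := ih hs; exact ⟨c', .cl hk ht h1, h2⟩
    | ne hk ht hs => obtain ⟨c', h1, h2⟩ := ih hs; exact ⟨c', .ne hk ht h1, h2⟩

/-- A run over a well-nested word never touches the initial stack, ends with the
same stack, and can be relocated to any stack. -/
theorem VPA.steps_wn {w : List α} (hw : WellNested A.kind w) :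
    ∀ {q : Q} {σ : List Γ} {c : Q × List Γ}, A.Steps (q, σ) w c →
    c.2 = σ ∧ ∀ τ, A.Steps (q, τ) w (c.1, τ) := by
  induction hw with
  | nil =>
    intro q σ c h; cases h; exact ⟨rfl, fun τ => .nil _⟩
  | neutral ha =>
    intro q σ c h
    cases h with
    | op hk ht hs => simp [ha] at hk
    | cl hk ht hs => simp [ha] at hk
    | ne hk ht hs => cases hs; exact ⟨rfl, fun τ => .ne hk ht (.nil _)⟩
  | concat hn1 hn2 hw1 hw2 ih1 ih2 =>
    intro q σ c h
    obtain ⟨c', h1, h2⟩ := VPA.steps_split h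
    obtain ⟨q₁, σ₁⟩ := c'
    obtain ⟨hσ1, hl1⟩ := ih1 h1
    cases hσ1
    obtain ⟨hσ2, hl2⟩ := ih2 h2
    exact ⟨hσ2, fun τ => (hl1 τ).append_run (hl2 τ)⟩
  | nest hka hkb hw ih =>
    intro q σ c h
    cases h with
    | cl hk ht hs => simp [hka] at hk
    | ne hk ht hs => simp [hka] at hk
    | op hk ht hs =>
      obtain ⟨c₂, h1, h2⟩ := VPA.steps_split hs
      obtain ⟨q₂, σ₂⟩ := c₂
      obtain ⟨hσ, hlift⟩ := ih h1
      cases hσ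
      cases h2 with
      | op hk' ht' hs' => simp [hkb] at hk'
      | ne hk' ht' hs' => simp [hkb] at hk'
      | cl hk' ht' hs' =>
        cases hs'
        exact ⟨rfl, fun τ =>
          .op hk ht (VPA.Steps.append_run (hlift (_ :: τ)) (.cl hk' ht' (.nil _)))⟩

theorem VPA.det_deterministic {c c₁ c₂ : Set (Q × Q) × List (Set (Q × Γ × Q))} {w : List α}
    (h₁ : A.det.Steps c w c₁) (h₂ : A.det.Steps c w c₂) : c₁ = c₂ := by
  induction h₁ generalizing c₂ with
  | nil => cases h₂; rfl
  | op hk ht _ ih =>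
    cases h₂ with
    | op hk' ht' hs' =>
      obtain ⟨rfl, rfl⟩ := ht
      obtain ⟨rfl, rfl⟩ := ht'
      exact ih hs'
    | cl hk' ht' hs' => rw [hk] at hk'; cases hk'
    | ne hk' ht' hs' => rw [hk] at hk'; cases hk'
  | cl hk ht _ ih =>
    cases h₂ with
    | op hk' ht' hs' => rw [hk] at hk'; cases hk'
    | cl hk' ht' hs' =>
      cases ht; cases ht'
      exact ih hs'
    | ne hk' ht' hs' => rw [hk] at hk'; cases hk'
  | ne hk ht _ ih =>
    cases h₂ with
    | op hk' ht' hs' => rw [hk] at hk'; cases hk'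
    | cl hk' ht' hs' => rw [hk] at hk'; cases hk'
    | ne hk' ht' hs' =>
      cases ht; cases ht'
      exact ih hs'

theorem VPA.det_complete_aux {w : List α} (hw : WellNested A.kind w) :
    ∀ {p q q' : Q} {S : Set (Q × Q)}, (p, q) ∈ S →
      A.Steps (q, ([] : List Γ)) w (q', []) →
      ∃ S', A.det.Steps (S, []) w (S', []) ∧ (p, q') ∈ S' := by
  induction hw with
  | nil =>
    intro p q q' S hS h
    cases h
    exact ⟨S, .nil _, hS⟩
  | neutral ha =>
    intro p q q' S hS h
    cases h with
    | op hk ht hs => simp [ha] at hk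
    | ne hk ht hs =>
      cases hs
      exact ⟨_, .ne hk rfl (.nil _), ⟨q, hS, ht⟩⟩
  | concat hn1 hn2 hw1 hw2 ih1 ih2 =>
    intro p q q' S hS h
    obtain ⟨c, h1, h2⟩ := VPA.steps_split h
    obtain ⟨q₁, σ₁⟩ := c
    have hσ := (VPA.steps_wn hw1 h1).1
    cases hσ
    obtain ⟨S₁, hd1, hm1⟩ := ih1 hS h1
    obtain ⟨S₂, hd2, hm2⟩ := ih2 hm1 h2
    exact ⟨S₂, hd1.append_run hd2, hm2⟩
  | @nest a b w hka hkb hw ih =>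
    intro p q q' S hS h
    cases h with
    | ne hk ht hs => simp [hka] at hk
    | @op _ q₁ _ x _ _ _ hk ht hs =>
      obtain ⟨c₂, h1, h2⟩ := VPA.steps_split hs
      obtain ⟨q₂, σ₂⟩ := c₂
      obtain ⟨hσ, hlift⟩ := VPA.steps_wn hw h1
      cases hσ
      cases h2 with
      | op hk' ht' hs' => simp [hkb] at hk'
      | ne hk' ht' hs' => simp [hkb] at hk'
      | cl hk' ht' hs' =>
        cases hs'
        have hS₁ : ((q₁, q₁) : Q × Q) ∈
            {r : Q × Q | r.1 = r.2 ∧ ∃ p p' x, (p, p') ∈ S ∧ A.Δop p' a r.1 x} :=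
          ⟨rfl, p, q, x, hS, ht⟩
        obtain ⟨S₂, hd, hm⟩ := ih hS₁ (hlift [])
        have hwd : WellNested A.det.kind w := hw
        have hdl := (VPA.steps_wn hwd hd).2
          [{t : Q × Γ × Q | ∃ p', (t.1, p') ∈ S ∧ A.Δop p' a t.2.2 t.2.1}]
        refine ⟨_, .op hk ⟨rfl, rfl⟩ (hdl.append_run (.cl hk' rfl (.nil _))), ?_⟩
        exact ⟨q₁, q₂, x, hm, ⟨q, hS, ht⟩, ht'⟩

end Aux

/-- Soundness of the subset construction: if `(p, q) ∈ S` and `A` has a run from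
`(q, ε)` over a well-nested word `w` ending in state `q'`, then the (unique) run of
the determinized automaton from `(S, ε)` over `w` exists and ends in a state
containing `(p, q')`. -/
theorem vpa_det_complete {α Q Γ : Type*} (A : VPA α Q Γ)
    {w : List α} (hw : WellNested A.kind w)
    {p q q' : Q} {σ : List Γ} {S : Set (Q × Q)}
    (hS : (p, q) ∈ S) (hrun : A.Steps (q, []) w (q', σ)) :
    (∃ S' : Set (Q × Q), A.det.Steps (S, []) w (S', []) ∧ (p, q') ∈ S') ∧
    (∀ (S' : Set (Q × Q)) (τ : List (Set (Q × Γ × Q))),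
        A.det.Steps (S, []) w (S', τ) → (p, q') ∈ S') := by
  have hσ := (VPA.steps_wn hw hrun).1
  cases hσ
  obtain ⟨S', hd, hm⟩ := VPA.det_complete_aux hw hS hrun
  refine ⟨⟨S', hd, hm⟩, ?_⟩
  intro S'' τ h
  have heq := VPA.det_deterministic hd h
  injection heq with h1 h2
  exact h1 ▸ hm
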